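/- Let f_n(x) = Σ_{i=0}^n C(n,i) a_i x^i with a_0, …, a_n i.i.d. standard normal, let Φ denote the standard normal cumulative distribution function, and set ξ_n = (log n) · (1 + (log n)/(6n))^n. Then for all n ≥ 2, P(f_n(x) > 0 for all x ∈ (0, (log n)/(6n))) ≥ (1 − Φ(ξ_n)) · (2Φ(log n) − 1)^n. -/

import Mathlib

open MeasureTheory ProbabilityTheory Real

/-- `Φ`, the standard normal cumulative distribution function. -/
noncomputable def stdNormalCDF (x : ℝ) : ℝ :=
  ((ProbabilityTheory.gaussianReal 0 1) (Set.Iic x)).toReal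

lemma gauss_neg_map : (gaussianReal 0 1).map (fun x : ℝ => -x) = gaussianReal 0 1 := by
  have h := gaussianReal_map_const_mul (μ := 0) (v := 1) (-1)
  simp only [neg_one_mul, mul_zero] at h
  convert h using 2
  ext
  norm_num

lemma gauss_Iic_neg (t : ℝ) : gaussianReal 0 1 (Set.Iic (-t)) = gaussianReal 0 1 (Set.Ici t) := by
  conv_lhs => rw [← gauss_neg_map]
  rw [Measure.map_apply measurable_neg measurableSet_Iic]
  congr 1
  ext x
  simp [le_neg]

lemma gauss_singleton (t : ℝ) : gaussianReal 0 1 {t} = 0 :=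
  gaussianReal_absolutelyContinuous 0 one_ne_zero (measure_singleton t)

lemma gauss_union_pt (s : Set ℝ) (t : ℝ) : gaussianReal 0 1 (s ∪ {t}) = gaussianReal 0 1 s :=
  le_antisymm (le_trans (measure_union_le _ _) (by simp [gauss_singleton]))
    (measure_mono Set.subset_union_left)

lemma gauss_Ioi (t : ℝ) :
    (gaussianReal 0 1 (Set.Ioi t)).toReal = 1 - stdNormalCDF t := by
  have h : gaussianReal 0 1 (Set.Iic t) + gaussianReal 0 1 (Set.Ioi t) = 1 := by
    have := measure_add_measure_compl (μ := gaussianReal 0 1) (measurableSet_Iic (a := t))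
    rwa [Set.compl_Iic, measure_univ] at this
  have h1 := measure_ne_top (gaussianReal 0 1) (Set.Iic t)
  have h2 := measure_ne_top (gaussianReal 0 1) (Set.Ioi t)
  have := congrArg ENNReal.toReal h
  rw [ENNReal.toReal_add h1 h2] at this
  simp only [ENNReal.toReal_one] at this
  unfold stdNormalCDF
  linarith

lemma gauss_Ioo (t : ℝ) (ht : 0 < t) :
    (gaussianReal 0 1 (Set.Ioo (-t) t)).toReal = 2 * stdNormalCDF t - 1 := by
  have hIci : (gaussianReal 0 1 (Set.Ici t)).toReal = 1 - stdNormalCDF t := by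
    have hU : Set.Ici t = Set.Ioi t ∪ {t} := by
      ext x; simp [le_iff_lt_or_eq, or_comm, eq_comm]
    rw [hU, gauss_union_pt, gauss_Ioi]
  have hOoc : Set.Ioc (-t) t = Set.Ioo (-t) t ∪ {t} := by
    ext x
    simp only [Set.mem_Ioc, Set.mem_union, Set.mem_Ioo, Set.mem_singleton_iff]
    constructor
    · rintro ⟨h1, h2⟩
      rcases lt_or_eq_of_le h2 with h | h
      · exact Or.inl ⟨h1, h⟩
      · exact Or.inr h
    · rintro (⟨h1, h2⟩ | h)
      · exact ⟨h1, h2.le⟩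
      · refine h ▸ ⟨by linarith, le_rfl⟩
  have hsplit : gaussianReal 0 1 (Set.Iic (-t)) + gaussianReal 0 1 (Set.Ioc (-t) t)
      = gaussianReal 0 1 (Set.Iic t) := by
    rw [← measure_union (by exact Set.Iic_disjoint_Ioc le_rfl) measurableSet_Ioc,
      Set.Iic_union_Ioc_eq_Iic (by linarith)]
  have h1 := measure_ne_top (gaussianReal 0 1) (Set.Iic (-t))
  have h2 := measure_ne_top (gaussianReal 0 1) (Set.Ioc (-t) t)
  have htr := congrArg ENNReal.toReal hsplit
  rw [ENNReal.toReal_add h1 h2] at htr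
  have hneg : (gaussianReal 0 1 (Set.Iic (-t))).toReal = 1 - stdNormalCDF t := by
    rw [gauss_Iic_neg, hIci]
  rw [hOoc, gauss_union_pt] at htr
  unfold stdNormalCDF at *
  linarith

lemma binom_sum (n : ℕ) (x : ℝ) :
    ∑ i : Fin (n + 1), (n.choose i : ℝ) * x ^ (i : ℕ) = (1 + x) ^ n := by
  rw [Fin.sum_univ_eq_sum_range (fun i => (n.choose i : ℝ) * x ^ i), add_comm (1:ℝ) x, add_pow]
  refine Finset.sum_congr rfl fun i _ => by rw [one_pow]; ring

/-- with `ξ_n = (log n)(1 + (log n)/(6n))^n`, for all `n ≥ 2`,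
`P(f_n(x) > 0 ∀ x ∈ (0, (log n)/(6n))) ≥ (1 - Φ(ξ_n)) (2Φ(log n) - 1)^n`. -/
theorem stmt_9 (n : ℕ) (hn : 2 ≤ n) :
    (1 - stdNormalCDF (Real.log n * (1 + Real.log n / (6 * n)) ^ n)) *
        (2 * stdNormalCDF (Real.log n) - 1) ^ n ≤
      ((Measure.pi fun _ : Fin (n + 1) => gaussianReal 0 1)
        {a : Fin (n + 1) → ℝ | ∀ x : ℝ, 0 < x → x < Real.log n / (6 * n) →
          0 < ∑ i : Fin (n + 1), (n.choose i : ℝ) * a i * x ^ (i : ℕ)}).toReal := by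
  set t : ℝ := Real.log n with ht_def
  have ht : 0 < t := Real.log_pos (by exact_mod_cast hn)
  set L : ℝ := t / (6 * n) with hL_def
  have hnpos : (0 : ℝ) < n := by positivity
  have hL : 0 < L := by positivity
  set ξ : ℝ := t * (1 + L) ^ n with hξ_def
  -- the product set
  set s : Fin (n + 1) → Set ℝ := fun i => if i = 0 then Set.Ioi ξ else Set.Ioo (-t) t with hs_def
  set μ : Measure (Fin (n + 1) → ℝ) := Measure.pi fun _ : Fin (n + 1) => gaussianReal 0 1 with hμ
  have hsub : Set.pi Set.univ s ⊆
      {a : Fin (n + 1) → ℝ | ∀ x : ℝ, 0 < x → x < L →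
        0 < ∑ i : Fin (n + 1), (n.choose i : ℝ) * a i * x ^ (i : ℕ)} := by
    intro a ha x hx hxL
    simp only [Set.mem_pi, Set.mem_univ, forall_true_left] at ha
    have ha0 : ξ < a 0 := by
      have := ha 0; simp only [hs_def, if_pos rfl, Set.mem_Ioi] at this; exact this
    have hai : ∀ i : Fin (n + 1), i ≠ 0 → -t < a i ∧ a i < t := by
      intro i hi
      have := ha i; simp only [hs_def, if_neg hi, Set.mem_Ioo] at this; exact this
    -- lower bound each tail term
    have hterm : ∀ i : Fin n,
        -((n.choose (i + 1) : ℝ) * t * x ^ ((i : ℕ) + 1)) ≤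
          (n.choose ((i : Fin n).succ : Fin (n+1)) : ℝ) * a (i : Fin n).succ
            * x ^ (((i : Fin n).succ : Fin (n+1)) : ℕ) := by
      intro i
      have hne : (i : Fin n).succ ≠ (0 : Fin (n + 1)) := Fin.succ_ne_zero i
      obtain ⟨hlo, _⟩ := hai _ hne
      have hxp : 0 < x ^ ((i : ℕ) + 1) := pow_pos hx _
      have hc : (0 : ℝ) ≤ (n.choose (i + 1) : ℝ) := by positivity
      have : -t * x ^ ((i : ℕ) + 1) ≤ a (i : Fin n).succ * x ^ ((i : ℕ) + 1) := by
        apply mul_le_mul_of_nonneg_right hlo.le hxp.le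
      have hval : (((i : Fin n).succ : Fin (n+1)) : ℕ) = (i : ℕ) + 1 := Fin.val_succ i
      rw [hval]
      calc -((n.choose (i + 1) : ℝ) * t * x ^ ((i : ℕ) + 1))
          = (n.choose (i + 1) : ℝ) * (-t * x ^ ((i : ℕ) + 1)) := by ring
        _ ≤ (n.choose (i + 1) : ℝ) * (a (i : Fin n).succ * x ^ ((i : ℕ) + 1)) :=
            mul_le_mul_of_nonneg_left this hc
        _ = (n.choose (i + 1) : ℝ) * a (i : Fin n).succ * x ^ ((i : ℕ) + 1) := by ring
    show 0 < ∑ i : Fin (n + 1), (n.choose i : ℝ) * a i * x ^ (i : ℕ)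
    rw [Fin.sum_univ_succ]
    simp only [Fin.val_zero, pow_zero, mul_one, Nat.choose_zero_right, Nat.cast_one, one_mul]
    have hsum : -∑ i : Fin n, (n.choose ((i : ℕ) + 1) : ℝ) * t * x ^ ((i : ℕ) + 1)
        ≤ ∑ i : Fin n, (n.choose ((i : Fin n).succ : Fin (n+1)) : ℝ) * a (i : Fin n).succ
            * x ^ (((i : Fin n).succ : Fin (n+1)) : ℕ) := by
      rw [← Finset.sum_neg_distrib]
      exact Finset.sum_le_sum fun i _ => hterm i
    -- now bound the deterministic sum
    have hbs : ∑ i : Fin n, (n.choose ((i : ℕ) + 1) : ℝ) * t * x ^ ((i : ℕ) + 1)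
        = t * ((1 + x) ^ n - 1) := by
      have hb := binom_sum n x
      rw [Fin.sum_univ_succ] at hb
      simp only [Fin.val_zero, pow_zero, mul_one, Nat.choose_zero_right, Nat.cast_one,
        Fin.val_succ] at hb
      have h2 : ∑ i : Fin n, (n.choose ((i : ℕ) + 1) : ℝ) * x ^ ((i : ℕ) + 1)
          = (1 + x) ^ n - 1 := by linarith
      calc ∑ i : Fin n, (n.choose ((i : ℕ) + 1) : ℝ) * t * x ^ ((i : ℕ) + 1)
          = t * ∑ i : Fin n, (n.choose ((i : ℕ) + 1) : ℝ) * x ^ ((i : ℕ) + 1) := by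
            rw [Finset.mul_sum]; exact Finset.sum_congr rfl fun i _ => by ring
        _ = t * ((1 + x) ^ n - 1) := by rw [h2]
    have hpow : (1 + x) ^ n ≤ (1 + L) ^ n :=
      pow_le_pow_left₀ (by linarith) (by linarith) n
    have hbound : t * ((1 + x) ^ n - 1) ≤ ξ - t := by
      rw [hξ_def]
      nlinarith [mul_le_mul_of_nonneg_left hpow ht.le]
    calc (0 : ℝ) < t := ht
      _ = ξ - (ξ - t) := by ring
      _ ≤ a 0 - t * ((1 + x) ^ n - 1) := by linarith
      _ = a 0 + -(t * ((1 + x) ^ n - 1)) := by ring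
      _ ≤ a 0 + ∑ i : Fin n, (n.choose ((i : Fin n).succ : Fin (n+1)) : ℝ) * a (i : Fin n).succ
            * x ^ (((i : Fin n).succ : Fin (n+1)) : ℕ) := by
          rw [← hbs] at *
          exact add_le_add le_rfl hsum
  -- measure of the product set
  have hmeas : μ (Set.pi Set.univ s)
      = gaussianReal 0 1 (Set.Ioi ξ) * (gaussianReal 0 1 (Set.Ioo (-t) t)) ^ n := by
    rw [hμ, Measure.pi_pi, Fin.prod_univ_succ]
    have h0 : s 0 = Set.Ioi ξ := if_pos rfl
    have hsucc : ∀ i : Fin n, s i.succ = Set.Ioo (-t) t := fun i => if_neg (Fin.succ_ne_zero i)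
    rw [h0]
    congr 1
    calc ∏ i : Fin n, gaussianReal 0 1 (s i.succ)
        = ∏ _i : Fin n, gaussianReal 0 1 (Set.Ioo (-t) t) :=
          Finset.prod_congr rfl fun i _ => by rw [hsucc]
      _ = gaussianReal 0 1 (Set.Ioo (-t) t) ^ n := by
          rw [Finset.prod_const, Finset.card_univ, Fintype.card_fin]
  have hμev := measure_mono (μ := μ) hsub
  have hfin : μ {a : Fin (n + 1) → ℝ | ∀ x : ℝ, 0 < x → x < L →
      0 < ∑ i : Fin (n + 1), (n.choose i : ℝ) * a i * x ^ (i : ℕ)} ≠ ⊤ := measure_ne_top _ _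
  have hle := ENNReal.toReal_le_toReal (measure_ne_top μ _) hfin |>.mpr hμev
  refine le_trans (le_of_eq ?_) hle
  rw [hmeas, ENNReal.toReal_mul, ENNReal.toReal_pow, gauss_Ioi, gauss_Ioo t ht]
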